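/- arXiv:2307.08431 — 3 statements merged into one kernel-verified Lean document; each statement's English description precedes it below -/
import Mathlib

section
/- Let V, Q be real Hilbert spaces, A : V → V' the operator of a bounded coercive symmetric bilinear form, and B : V → Q' bounded and surjective with bounded B'. If λ_min > 0 is the smallest eigenvalue/infimum of the Rayleigh quotient (B A⁻¹ B' q)(q) / ‖q‖_Q² over nonzero q ∈ Q, then the inf-sup condition sup_{v≠0} (B v)(q)/‖v‖_{a} ≥ √λ_min ‖q‖_Q holds for all q ∈ Q, where ‖v‖_a² = (A v)(v). (Qin's lemma: β = √λ_min.) -/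
theorem stmt10 {V Q : Type*}
    [NormedAddCommGroup V] [InnerProductSpace ℝ V] [CompleteSpace V]
    [NormedAddCommGroup Q] [InnerProductSpace ℝ Q] [CompleteSpace Q]
    (a : V →L[ℝ] V →L[ℝ] ℝ) (α : ℝ) (hα : 0 < α)
    (hsymm : ∀ u v : V, a u v = a v u)
    (hcoer : ∀ v : V, α * ‖v‖ ^ 2 ≤ a v v)
    (B : V →L[ℝ] Q →L[ℝ] ℝ) (hsurj : Function.Surjective B)
    (Ainv : (V →L[ℝ] ℝ) →L[ℝ] V)
    (hA1 : ∀ f : V →L[ℝ] ℝ, a (Ainv f) = f)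
    (hA2 : ∀ u : V, Ainv (a u) = u)
    (lmin : ℝ) (hlmin : 0 < lmin)
    (hglb : IsGLB {r : ℝ | ∃ q : Q, q ≠ 0 ∧ r = B (Ainv (B.flip q)) q / ‖q‖ ^ 2} lmin) :
    ∀ q : Q,
      Real.sqrt lmin * ‖q‖ ≤
        ⨆ v : {v : V // v ≠ 0}, B v.1 q / Real.sqrt (a v.1 v.1) := by
  intro q
  by_cases hq : q = 0
  · subst hq
    have h0 : ∀ v : {v : V // v ≠ 0}, B v.1 (0:Q) / Real.sqrt (a v.1 v.1) = 0 := by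
      intro v; simp
    simp only [norm_zero, mul_zero]
    rcases isEmpty_or_nonempty {v : V // v ≠ 0} with h | h
    · rw [Real.iSup_of_isEmpty]
    · have : (⨆ v : {v : V // v ≠ 0}, B v.1 (0:Q) / Real.sqrt (a v.1 v.1)) =
          ⨆ _ : {v : V // v ≠ 0}, (0:ℝ) := by
        congr 1; funext v; exact h0 v
      rw [this, ciSup_const]
  · -- nonzero case
    have hqn : (0:ℝ) < ‖q‖ := norm_pos_iff.mpr hq
    set v₀ : V := Ainv (B.flip q) with hv₀def
    have hc : a v₀ v₀ = B v₀ q := by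
      have := congrArg (fun f : V →L[ℝ] ℝ => f v₀) (hA1 (B.flip q))
      simpa [ContinuousLinearMap.flip_apply] using this
    have hmem : B v₀ q / ‖q‖ ^ 2 ∈
        {r : ℝ | ∃ q : Q, q ≠ 0 ∧ r = B (Ainv (B.flip q)) q / ‖q‖ ^ 2} :=
      ⟨q, hq, rfl⟩
    have hlb : lmin ≤ B v₀ q / ‖q‖ ^ 2 := hglb.1 hmem
    have hBq : lmin * ‖q‖ ^ 2 ≤ B v₀ q := by
      rw [← le_div_iff₀ (by positivity)]; exact hlb
    have hBqpos : (0:ℝ) < B v₀ q := lt_of_lt_of_le (by positivity) hBq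
    have hv₀ : v₀ ≠ 0 := by
      intro h
      rw [h] at hBqpos
      simp at hBqpos
    -- bounded above
    have hbdd : BddAbove (Set.range fun v : {v : V // v ≠ 0} =>
        B v.1 q / Real.sqrt (a v.1 v.1)) := by
      refine ⟨‖B‖ * ‖q‖ / Real.sqrt α, ?_⟩
      rintro x ⟨v, rfl⟩
      have hvn : (0:ℝ) < ‖v.1‖ := norm_pos_iff.mpr v.2
      have hsα : (0:ℝ) < Real.sqrt α := Real.sqrt_pos.mpr hα
      have h2 : Real.sqrt α * ‖v.1‖ ≤ Real.sqrt (a v.1 v.1) := by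
        rw [← Real.sqrt_sq hvn.le, ← Real.sqrt_mul hα.le]
        exact Real.sqrt_le_sqrt (hcoer v.1)
      have h3 : B v.1 q ≤ ‖B‖ * ‖v.1‖ * ‖q‖ := by
        calc B v.1 q ≤ |B v.1 q| := le_abs_self _
          _ = ‖B v.1 q‖ := (Real.norm_eq_abs _).symm
          _ ≤ ‖B v.1‖ * ‖q‖ := (B v.1).le_opNorm q
          _ ≤ (‖B‖ * ‖v.1‖) * ‖q‖ :=
            mul_le_mul_of_nonneg_right (B.le_opNorm v.1) (norm_nonneg q)
      have h4 : B v.1 q / Real.sqrt (a v.1 v.1) ≤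
          (‖B‖ * ‖v.1‖ * ‖q‖) / (Real.sqrt α * ‖v.1‖) :=
        div_le_div₀ (by positivity) h3 (by positivity) h2
      refine h4.trans (le_of_eq ?_)
      field_simp
    refine le_ciSup_of_le hbdd ⟨v₀, hv₀⟩ ?_
    rw [hc, Real.div_sqrt]
    have : Real.sqrt lmin * ‖q‖ = Real.sqrt (lmin * ‖q‖ ^ 2) := by
      rw [Real.sqrt_mul hlmin.le, Real.sqrt_sq (norm_nonneg q)]
    rw [this]
    exact Real.sqrt_le_sqrt hBq
end

section
/- Let X₁, X₂, X₃ be real Hilbert spaces, A : X₁×X₂ → (X₁×X₂)' induced by a bounded symmetric coercive bilinear form a with constants α ≤ M, and B : X₁×X₂ → X₃' induced by a bounded bilinear form b with boundedness constant C_B satisfying the inf-sup condition with constant β > 0. Then the saddle-point operator 𝒜 = [[A, B'],[B, 0]] : X → X' on X = X₁×X₂×X₃ is an isomorphism, i.e. boundedly invertible, provided a is coercive on all of X₁×X₂. -/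
noncomputable section

open InnerProductSpace RealInnerProductSpace ContinuousLinearMap

namespace Stmt14Aux

lemma le_of_sq_le {a b : ℝ} (ha : 0 ≤ a) (hb : 0 ≤ b) (h : a ^ 2 ≤ b ^ 2) : a ≤ b := by
  nlinarith

variable {V Q : Type*}
  [NormedAddCommGroup V] [InnerProductSpace ℝ V] [CompleteSpace V]
  [NormedAddCommGroup Q] [InnerProductSpace ℝ Q] [CompleteSpace Q]

/-- The Riesz lift of the second variable of a bilinear form. -/
def Btop (b' : V →L[ℝ] Q →L[ℝ] ℝ) : Q →L[ℝ] V :=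
  LinearMap.mkContinuous
    { toFun := fun q => (toDual ℝ V).symm (b'.flip q)
      map_add' := fun q₁ q₂ => by simp
      map_smul' := fun r q => by simp }
    ‖b'.flip‖ (fun q => by
      simpa using (b'.flip.le_opNorm q))

lemma inner_Btop (b' : V →L[ℝ] Q →L[ℝ] ℝ) (q : Q) (v : V) :
    ⟪Btop b' q, v⟫_ℝ = b' v q := by
  simpa [Btop] using (toDual_symm_apply (𝕜 := ℝ) (E := V) (x := v) (y := b'.flip q))

lemma norm_Btop (b' : V →L[ℝ] Q →L[ℝ] ℝ) (q : Q) :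
    ‖Btop b' q‖ = ‖b'.flip q‖ := by
  simp [Btop]

set_option maxHeartbeats 1000000 in
theorem solvable
    (a' : V →L[ℝ] V →L[ℝ] ℝ) (b' : V →L[ℝ] Q →L[ℝ] ℝ)
    (α M β : ℝ) (hα : 0 < α) (hM : 0 < M) (hβ : 0 < β)
    (hsymm : ∀ u v, a' u v = a' v u)
    (haM : ∀ u v, |a' u v| ≤ M * ‖u‖ * ‖v‖)
    (hcoer : ∀ u, α * (‖u‖ * ‖u‖) ≤ a' u u)
    (hinfsup : ∀ q, β * ‖q‖ ≤ ‖b'.flip q‖) :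
    (∀ (u : V) (p : Q), (∀ v, a' u v + b' v p = 0) → (∀ q, b' u q = 0) →
        u = 0 ∧ p = 0)
    ∧ ∀ (f : V →L[ℝ] ℝ) (g : Q →L[ℝ] ℝ), ∃ (u : V) (p : Q),
        (∀ v, a' u v + b' v p = f v) ∧ (∀ q, b' u q = g q) := by
  have coercive : IsCoercive a' := ⟨α, hα, fun u => by
    have := hcoer u; linarith [this, (mul_assoc α ‖u‖ ‖u‖)]⟩
  set Aop := coercive.continuousLinearEquivOfBilin with hAopdef
  have hAop : ∀ u v, ⟪Aop u, v⟫_ℝ = a' u v := fun u v =>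
    coercive.continuousLinearEquivOfBilin_apply u v
  have hAsym : ∀ x y : V, ⟪Aop x, y⟫_ℝ = ⟪x, Aop y⟫_ℝ := by
    intro x y
    rw [hAop, hsymm, ← hAop, real_inner_comm]
  have hAopnorm : ∀ z : V, ‖Aop z‖ ≤ M * ‖z‖ := by
    intro z
    rcases eq_or_lt_of_le (norm_nonneg (Aop z)) with h0 | h0
    · rw [← h0]; positivity
    · have h1 : ‖Aop z‖ * ‖Aop z‖ ≤ (M * ‖z‖) * ‖Aop z‖ := by
        calc ‖Aop z‖ * ‖Aop z‖ = ⟪Aop z, Aop z⟫_ℝ := (real_inner_self_eq_norm_mul_norm _).symm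
        _ = a' z (Aop z) := hAop _ _
        _ ≤ |a' z (Aop z)| := le_abs_self _
        _ ≤ M * ‖z‖ * ‖Aop z‖ := haM _ _
      exact le_of_mul_le_mul_right h1 h0
  -- the operator w = Aop⁻¹ ∘ Btop and the Schur complement form s
  set wL : Q →L[ℝ] V := (Aop.symm : V →L[ℝ] V).comp (Btop b') with hwLdef
  have hwL : ∀ q, wL q = Aop.symm (Btop b' q) := fun q => rfl
  have hBA : ∀ q, Aop (wL q) = Btop b' q := fun q => by
    rw [hwL]; exact Aop.apply_symm_apply _
  set s : Q →L[ℝ] Q →L[ℝ] ℝ := b'.comp wL with hsdef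
  have hs : ∀ q q', s q q' = b' (wL q) q' := fun q q' => rfl
  have hkey : ∀ (z : V) (q : Q), b' (Aop.symm z) q = ⟪z, wL q⟫_ℝ := by
    intro z q
    calc b' (Aop.symm z) q = ⟪Btop b' q, Aop.symm z⟫_ℝ := (inner_Btop b' q _).symm
    _ = ⟪Aop (wL q), Aop.symm z⟫_ℝ := by rw [hBA]
    _ = ⟪wL q, Aop (Aop.symm z)⟫_ℝ := hAsym _ _
    _ = ⟪wL q, z⟫_ℝ := by rw [Aop.apply_symm_apply]
    _ = ⟪z, wL q⟫_ℝ := real_inner_comm _ _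
  have hwnorm : ∀ q, β * ‖q‖ ≤ M * ‖wL q‖ := by
    intro q
    calc β * ‖q‖ ≤ ‖b'.flip q‖ := hinfsup q
    _ = ‖Btop b' q‖ := (norm_Btop b' q).symm
    _ = ‖Aop (wL q)‖ := by rw [hBA]
    _ ≤ M * ‖wL q‖ := hAopnorm _
  have hsq : ∀ q, α * (‖wL q‖ * ‖wL q‖) ≤ s q q := by
    intro q
    calc α * (‖wL q‖ * ‖wL q‖) ≤ a' (wL q) (wL q) := hcoer _
    _ = ⟪Aop (wL q), wL q⟫_ℝ := (hAop _ _).symm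
    _ = ⟪Btop b' q, wL q⟫_ℝ := by rw [hBA]
    _ = b' (wL q) q := inner_Btop _ _ _
    _ = s q q := (hs q q).symm
  have scoercive : IsCoercive s := by
    refine ⟨α * β ^ 2 / M ^ 2, by positivity, fun q => ?_⟩
    have h1 : (β * ‖q‖) * (β * ‖q‖) ≤ (M * ‖wL q‖) * (M * ‖wL q‖) :=
      mul_self_le_mul_self (by positivity) (hwnorm q)
    have h2 := hsq q
    rw [div_mul_eq_mul_div, div_mul_eq_mul_div, div_le_iff₀ (by positivity : (0:ℝ) < M ^ 2)]
    calc α * β ^ 2 * ‖q‖ * ‖q‖ = α * ((β * ‖q‖) * (β * ‖q‖)) := by ring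
    _ ≤ α * ((M * ‖wL q‖) * (M * ‖wL q‖)) := mul_le_mul_of_nonneg_left h1 hα.le
    _ = (α * (‖wL q‖ * ‖wL q‖)) * M ^ 2 := by ring
    _ ≤ s q q * M ^ 2 := mul_le_mul_of_nonneg_right h2 (by positivity)
  set Sop := scoercive.continuousLinearEquivOfBilin with hSopdef
  have hSop : ∀ q q', ⟪Sop q, q'⟫_ℝ = s q q' := fun q q' =>
    scoercive.continuousLinearEquivOfBilin_apply q q'
  have hssymm : ∀ q q', s q q' = s q' q := by
    intro q q'
    calc s q q' = b' (wL q) q' := hs _ _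
    _ = ⟪Btop b' q', wL q⟫_ℝ := (inner_Btop _ _ _).symm
    _ = ⟪Aop (wL q'), wL q⟫_ℝ := by rw [hBA]
    _ = a' (wL q') (wL q) := hAop _ _
    _ = a' (wL q) (wL q') := hsymm _ _
    _ = ⟪Aop (wL q), wL q'⟫_ℝ := (hAop _ _).symm
    _ = ⟪Btop b' q, wL q'⟫_ℝ := by rw [hBA]
    _ = b' (wL q') q := inner_Btop _ _ _
    _ = s q' q := (hs _ _).symm
  constructor
  · -- injectivity
    intro u p h1 h2
    have hu0 : Aop u + Btop b' p = 0 := by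
      have hz : ∀ v, ⟪Aop u + Btop b' p, v⟫_ℝ = 0 := by
        intro v
        rw [inner_add_left, hAop, inner_Btop]
        exact h1 v
      have := hz (Aop u + Btop b' p)
      rwa [inner_self_eq_zero] at this
    have hAu : (Aop u : V) = - Btop b' p := by
      rw [eq_neg_iff_add_eq_zero]; exact hu0
    have huu : a' u u = 0 := by
      rw [← hAop, hAu, inner_neg_left, inner_Btop, h2, neg_zero]
    have hun : u = 0 := by
      have hc := hcoer u
      rw [huu] at hc
      by_contra hne
      have hpos : 0 < ‖u‖ := norm_pos_iff.mpr hne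
      nlinarith [hc, mul_pos hα (mul_pos hpos hpos)]
    have hB0 : Btop b' p = 0 := by
      have := hu0
      rw [hun] at this
      simpa using this
    have hp : p = 0 := by
      have hip := hinfsup p
      rw [← norm_Btop, hB0, norm_zero] at hip
      by_contra hne
      have hpos : 0 < ‖p‖ := norm_pos_iff.mpr hne
      nlinarith [hip, mul_pos hβ hpos]
    exact ⟨hun, hp⟩
  · -- surjectivity
    intro f g
    set f₀ : V := (toDual ℝ V).symm f with hf₀def
    have hf₀ : ∀ v, ⟪f₀, v⟫_ℝ = f v := fun v => toDual_symm_apply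
    set hfun : Q →L[ℝ] ℝ := b' (Aop.symm f₀) - g with hfundef
    set h₀ : Q := (toDual ℝ Q).symm hfun with hh₀def
    have hh₀ : ∀ q, ⟪h₀, q⟫_ℝ = hfun q := fun q => toDual_symm_apply
    set p : Q := Sop.symm h₀ with hpdef
    set u : V := Aop.symm (f₀ - Btop b' p) with hudef
    have hsp : ∀ q, s p q = hfun q := by
      intro q
      rw [← hSop, hpdef, Sop.apply_symm_apply]
      exact hh₀ q
    have hAu : Aop u = f₀ - Btop b' p := Aop.apply_symm_apply _
    refine ⟨u, p, ?_, ?_⟩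
    · intro v
      calc a' u v + b' v p = ⟪Aop u, v⟫_ℝ + ⟪Btop b' p, v⟫_ℝ := by
            rw [hAop, inner_Btop]
      _ = ⟪Aop u + Btop b' p, v⟫_ℝ := (inner_add_left _ _ _).symm
      _ = ⟪f₀, v⟫_ℝ := by rw [hAu, sub_add_cancel]
      _ = f v := hf₀ v
    · intro q
      have e1 : b' u q = ⟪f₀ - Btop b' p, wL q⟫_ℝ := hkey _ q
      have e2 : b' (Aop.symm f₀) q = ⟪f₀, wL q⟫_ℝ := hkey _ q
      have e3 : ⟪Btop b' p, wL q⟫_ℝ = s q p := by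
        rw [inner_Btop]; exact (hs q p).symm
      have e4 : s q p = hfun q := by rw [hssymm]; exact hsp q
      have e5 : hfun q = b' (Aop.symm f₀) q - g q := rfl
      rw [e1, inner_sub_left, e3, e4, e5, e2]
      ring

end Stmt14Aux

end

set_option maxHeartbeats 1600000 in
theorem stmt14 {X₁ X₂ X₃ : Type*}
    [NormedAddCommGroup X₁] [InnerProductSpace ℝ X₁] [CompleteSpace X₁]
    [NormedAddCommGroup X₂] [InnerProductSpace ℝ X₂] [CompleteSpace X₂]
    [NormedAddCommGroup X₃] [InnerProductSpace ℝ X₃] [CompleteSpace X₃]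
    (a : (X₁ × X₂) →L[ℝ] (X₁ × X₂) →L[ℝ] ℝ)
    (b : (X₁ × X₂) →L[ℝ] X₃ →L[ℝ] ℝ)
    (α M C_B β : ℝ) (hα : 0 < α) (hαM : α ≤ M) (hβ : 0 < β)
    (hsymm : ∀ u v : X₁ × X₂, a u v = a v u)
    (haM : ∀ u v : X₁ × X₂, |a u v| ≤ M * ‖u‖ * ‖v‖)
    (hcoer : ∀ u : X₁ × X₂, α * ‖u‖ ^ 2 ≤ a u u)
    (hbC : ∀ (v : X₁ × X₂) (q : X₃), |b v q| ≤ C_B * ‖v‖ * ‖q‖)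
    (hinfsup : ∀ q : X₃,
        β * ‖q‖ ≤ ⨆ v : {v : X₁ × X₂ // v ≠ 0}, b v.1 q / ‖v.1‖) :
    ∃ e : ((X₁ × X₂) × X₃) ≃L[ℝ] (((X₁ × X₂) × X₃) →L[ℝ] ℝ),
      ∀ (u : X₁ × X₂) (p : X₃) (v : X₁ × X₂) (q : X₃),
        e (u, p) (v, q) = a u v + b v p + b u q := by
  classical
  letI iD0 : NormedAddCommGroup (((X₁ × X₂) × X₃) →L[ℝ] ℝ) := inferInstance
  letI iD1 : SeminormedAddCommGroup (((X₁ × X₂) × X₃) →L[ℝ] ℝ) := inferInstance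
  letI iD2 : NormedSpace ℝ (((X₁ × X₂) × X₃) →L[ℝ] ℝ) := inferInstance
  have hM : 0 < M := lt_of_lt_of_le hα hαM
  -- the saddle point operator T
  let T₀ : ((X₁ × X₂) × X₃) →ₗ[ℝ] (((X₁ × X₂) × X₃) →L[ℝ] ℝ) :=
    { toFun := fun x => (a x.1 + b.flip x.2).coprod (b x.1)
      map_add' := by
        intro x y
        refine ContinuousLinearMap.ext fun z => ?_
        obtain ⟨zv, zq⟩ := z
        simp only [ContinuousLinearMap.coprod_apply, ContinuousLinearMap.add_apply,
          ContinuousLinearMap.flip_apply, Prod.fst_add, Prod.snd_add, map_add,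
          ContinuousLinearMap.coe_add', Pi.add_apply]
        ring
      map_smul' := by
        intro c x
        refine ContinuousLinearMap.ext fun z => ?_
        obtain ⟨zv, zq⟩ := z
        simp only [ContinuousLinearMap.coprod_apply, ContinuousLinearMap.add_apply,
          ContinuousLinearMap.flip_apply, Prod.smul_fst, Prod.smul_snd, map_smul,
          ContinuousLinearMap.coe_smul', Pi.smul_apply, RingHom.id_apply,
          smul_eq_mul]
        ring }
  set C' : ℝ := max C_B 0 with hC'
  have hC'0 : 0 ≤ C' := le_max_right _ _
  have hbC' : ∀ (v : X₁ × X₂) (q : X₃), |b v q| ≤ C' * ‖v‖ * ‖q‖ := by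
    intro v q
    refine (hbC v q).trans ?_
    have : C_B ≤ C' := le_max_left _ _
    have h0 : 0 ≤ ‖v‖ * ‖q‖ := by positivity
    calc C_B * ‖v‖ * ‖q‖ = C_B * (‖v‖ * ‖q‖) := by ring
    _ ≤ C' * (‖v‖ * ‖q‖) := mul_le_mul_of_nonneg_right this h0
    _ = C' * ‖v‖ * ‖q‖ := by ring
  have bnd : ∀ x : ((X₁ × X₂) × X₃),
      ‖T₀ x‖ ≤ (M + C' + C') * ‖x‖ := by
    rintro ⟨u, p⟩
    apply ContinuousLinearMap.opNorm_le_bound _ (by positivity)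
    rintro ⟨v, q⟩
    have hup1 : ‖u‖ ≤ ‖(u, p)‖ := norm_fst_le (u, p)
    have hup2 : ‖p‖ ≤ ‖(u, p)‖ := norm_snd_le (u, p)
    have hvq1 : ‖v‖ ≤ ‖(v, q)‖ := norm_fst_le (v, q)
    have hvq2 : ‖q‖ ≤ ‖(v, q)‖ := norm_snd_le (v, q)
    have h1 : ‖a u v‖ ≤ M * ‖(u, p)‖ * ‖(v, q)‖ := by
      rw [Real.norm_eq_abs]
      refine (haM u v).trans ?_
      gcongr
    have h2 : ‖b v p‖ ≤ C' * ‖(u, p)‖ * ‖(v, q)‖ := by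
      rw [Real.norm_eq_abs]
      refine (hbC' v p).trans ?_
      calc C' * ‖v‖ * ‖p‖ = C' * ‖p‖ * ‖v‖ := by ring
      _ ≤ C' * ‖(u, p)‖ * ‖(v, q)‖ := by gcongr
    have h3 : ‖b u q‖ ≤ C' * ‖(u, p)‖ * ‖(v, q)‖ := by
      rw [Real.norm_eq_abs]
      refine (hbC' u q).trans ?_
      gcongr
    have hval : T₀ (u, p) (v, q) = a u v + b v p + b u q := by
      simp [T₀, ContinuousLinearMap.coprod_apply]
    rw [hval]
    calc ‖a u v + b v p + b u q‖
        ≤ ‖a u v + b v p‖ + ‖b u q‖ := norm_add_le _ _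
    _ ≤ ‖a u v‖ + ‖b v p‖ + ‖b u q‖ := by
        have := norm_add_le (a u v) (b v p); linarith
    _ ≤ (M + C' + C') * ‖(u, p)‖ * ‖(v, q)‖ := by nlinarith [h1, h2, h3]
  let T : ((X₁ × X₂) × X₃) →L[ℝ] (((X₁ × X₂) × X₃) →L[ℝ] ℝ) :=
    T₀.mkContinuous ((M + C' + C')) bnd
  have hT : ∀ (u : X₁ × X₂) (p : X₃) (v : X₁ × X₂) (q : X₃),
      T (u, p) (v, q) = a u v + b v p + b u q := by
    intro u p v q
    simp [T, T₀, ContinuousLinearMap.coprod_apply]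
  -- transfer to the Hilbert space `WithLp 2 (X₁ × X₂)`
  let ιL : WithLp 2 (X₁ × X₂) ≃L[ℝ] X₁ × X₂ := WithLp.prodContinuousLinearEquiv 2 ℝ X₁ X₂
  let ιC : WithLp 2 (X₁ × X₂) →L[ℝ] X₁ × X₂ := ιL
  let a' : WithLp 2 (X₁ × X₂) →L[ℝ] WithLp 2 (X₁ × X₂) →L[ℝ] ℝ :=
    ((a.comp ιC).flip.comp ιC).flip
  let b' : WithLp 2 (X₁ × X₂) →L[ℝ] X₃ →L[ℝ] ℝ := b.comp ιC
  have ha' : ∀ u v, a' u v = a (ιL u) (ιL v) := fun u v => rfl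
  have hb' : ∀ v q, b' v q = b (ιL v) q := fun v q => rfl
  have key : ∀ x : WithLp 2 (X₁ × X₂),
      ‖ιL x‖ ≤ ‖x‖ ∧ ‖x‖ ≤ Real.sqrt 2 * ‖ιL x‖ := by
    intro x
    have h2 : ‖x‖ ^ 2 = ‖x.fst‖ ^ 2 + ‖x.snd‖ ^ 2 := WithLp.prod_norm_sq_eq_of_L2 x
    have hι : ‖ιL x‖ = max ‖x.fst‖ ‖x.snd‖ := by
      have hxx : ιL x = (x.fst, x.snd) := rfl
      rw [hxx, Prod.norm_def]
    constructor
    · rw [hι]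
      apply max_le
      · apply Stmt14Aux.le_of_sq_le (norm_nonneg _) (norm_nonneg _)
        rw [h2]; nlinarith [sq_nonneg ‖x.snd‖]
      · apply Stmt14Aux.le_of_sq_le (norm_nonneg _) (norm_nonneg _)
        rw [h2]; nlinarith [sq_nonneg ‖x.fst‖]
    · apply Stmt14Aux.le_of_sq_le (norm_nonneg _) (by positivity)
      rw [mul_pow, Real.sq_sqrt (by norm_num : (0:ℝ) ≤ 2), h2, hι]
      rcases le_total ‖x.fst‖ ‖x.snd‖ with h | h
      · rw [max_eq_right h]; nlinarith [pow_le_pow_left₀ (norm_nonneg x.fst) h 2]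
      · rw [max_eq_left h]; nlinarith [pow_le_pow_left₀ (norm_nonneg x.snd) h 2]
  have ha'symm : ∀ u v, a' u v = a' v u := fun u v => hsymm _ _
  have ha'M : ∀ u v, |a' u v| ≤ M * ‖u‖ * ‖v‖ := by
    intro u v
    calc |a' u v| ≤ M * ‖ιL u‖ * ‖ιL v‖ := haM _ _
    _ ≤ M * ‖u‖ * ‖v‖ := by
        gcongr
        · exact (key u).1
        · exact (key v).1
  have ha'coer : ∀ u, (α / 2) * (‖u‖ * ‖u‖) ≤ a' u u := by
    intro u
    have h1 := hcoer (ιL u)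
    have h2 := (key u).2
    have h3 : ‖u‖ * ‖u‖ ≤ 2 * (‖ιL u‖ * ‖ιL u‖) := by
      have h4 := mul_self_le_mul_self (norm_nonneg u) h2
      have h5 : Real.sqrt 2 * ‖ιL u‖ * (Real.sqrt 2 * ‖ιL u‖)
          = 2 * (‖ιL u‖ * ‖ιL u‖) := by
        rw [show Real.sqrt 2 * ‖ιL u‖ * (Real.sqrt 2 * ‖ιL u‖)
            = (Real.sqrt 2 * Real.sqrt 2) * (‖ιL u‖ * ‖ιL u‖) by ring,
          Real.mul_self_sqrt (by norm_num : (0:ℝ) ≤ 2)]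
      linarith [h5 ▸ h4]
    calc (α / 2) * (‖u‖ * ‖u‖) ≤ (α / 2) * (2 * (‖ιL u‖ * ‖ιL u‖)) :=
          mul_le_mul_of_nonneg_left h3 (by positivity)
    _ = α * ‖ιL u‖ ^ 2 := by ring
    _ ≤ a (ιL u) (ιL u) := h1
    _ = a' u u := rfl
  have hs2 : (0:ℝ) < Real.sqrt 2 := Real.sqrt_pos.mpr (by norm_num)
  have hinfsup' : ∀ q, (β / Real.sqrt 2) * ‖q‖ ≤ ‖b'.flip q‖ := by
    intro q
    have hstep : (⨆ v : {v : X₁ × X₂ // v ≠ 0}, b v.1 q / ‖v.1‖)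
        ≤ Real.sqrt 2 * ‖b'.flip q‖ := by
      apply Real.iSup_le
      · rintro ⟨v, hv⟩
        have hvpos : 0 < ‖v‖ := norm_pos_iff.mpr hv
        rw [div_le_iff₀ hvpos]
        have e1 : b v q = b'.flip q (ιL.symm v) := by
          rw [ContinuousLinearMap.flip_apply, hb', ιL.apply_symm_apply]
        rw [e1]
        calc b'.flip q (ιL.symm v) ≤ |b'.flip q (ιL.symm v)| := le_abs_self _
        _ = ‖b'.flip q (ιL.symm v)‖ := (Real.norm_eq_abs _).symm
        _ ≤ ‖b'.flip q‖ * ‖ιL.symm v‖ := (b'.flip q).le_opNorm _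
        _ ≤ ‖b'.flip q‖ * (Real.sqrt 2 * ‖ιL (ιL.symm v)‖) :=
            mul_le_mul_of_nonneg_left (key _).2 (norm_nonneg _)
        _ = Real.sqrt 2 * ‖b'.flip q‖ * ‖v‖ := by rw [ιL.apply_symm_apply]; ring
      · positivity
    have hq := (hinfsup q).trans hstep
    rw [div_mul_eq_mul_div, div_le_iff₀ hs2]
    linarith [hq]
  obtain ⟨Hinj, Hsurj⟩ := Stmt14Aux.solvable a' b' (α / 2) M (β / Real.sqrt 2)
    (by positivity) hM (by positivity) ha'symm ha'M ha'coer hinfsup'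
  have hker : LinearMap.ker (T : ((X₁ × X₂) × X₃) →ₗ[ℝ] (((X₁ × X₂) × X₃) →L[ℝ] ℝ)) = ⊥ := by
    rw [LinearMap.ker_eq_bot']
    rintro ⟨uX, p⟩ hT0
    have hzero : ∀ y, T (uX, p) y = 0 := by
      intro y; rw [ContinuousLinearMap.coe_coe] at hT0; rw [hT0]; rfl
    have e1 : ∀ v : WithLp 2 (X₁ × X₂), a' (ιL.symm uX) v + b' v p = 0 := by
      intro v
      have h := hzero (ιL v, 0)
      rw [hT] at h
      rw [ha', hb', ιL.apply_symm_apply]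
      simpa using h
    have e2 : ∀ q, b' (ιL.symm uX) q = 0 := by
      intro q
      have h := hzero (0, q)
      rw [hT] at h
      rw [hb', ιL.apply_symm_apply]
      simpa using h
    obtain ⟨hu0, hp0⟩ := Hinj _ _ e1 e2
    have huX : uX = 0 := by
      have h := congrArg ιL hu0
      rwa [ιL.apply_symm_apply, map_zero] at h
    simp [huX, hp0, Prod.ext_iff]
  have hrange : LinearMap.range (T : ((X₁ × X₂) × X₃) →ₗ[ℝ] (((X₁ × X₂) × X₃) →L[ℝ] ℝ)) = ⊤ := by
    rw [LinearMap.range_eq_top]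
    intro F
    let f : WithLp 2 (X₁ × X₂) →L[ℝ] ℝ :=
      F.comp ((ContinuousLinearMap.inl ℝ (X₁ × X₂) X₃).comp ιC)
    let g : X₃ →L[ℝ] ℝ := F.comp (ContinuousLinearMap.inr ℝ (X₁ × X₂) X₃)
    obtain ⟨u, p, h1, h2⟩ := Hsurj f g
    refine ⟨(ιL u, p), ?_⟩
    apply ContinuousLinearMap.ext
    rintro ⟨v, q⟩
    rw [ContinuousLinearMap.coe_coe, hT]
    have hv := h1 (ιL.symm v)
    rw [ha', hb', ιL.apply_symm_apply] at hv
    have hq := h2 q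
    rw [hb'] at hq
    have hf : f (ιL.symm v) = F (v, 0) := by
      show F (ContinuousLinearMap.inl ℝ (X₁ × X₂) X₃ (ιC (ιL.symm v))) = F (v, 0)
      have : ιC (ιL.symm v) = v := ιL.apply_symm_apply v
      rw [this, ContinuousLinearMap.inl_apply]
    have hg : g q = F (0, q) := rfl
    have hFsplit : F (v, q) = F (v, 0) + F (0, q) := by
      rw [← map_add]
      norm_num
    rw [hFsplit, ← hf, ← hg, ← hv, ← hq]
  let e0 : ((X₁ × X₂) × X₃) ≃L[ℝ] (((X₁ × X₂) × X₃) →L[ℝ] ℝ) :=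
    ContinuousLinearEquiv.ofBijective T hker hrange
  refine ⟨e0, ?_⟩
  intro u p v q
  show T (u, p) (v, q) = a u v + b v p + b u q
  exact hT u p v q
end

section
/- Let V₁, V₂, Q be real Hilbert spaces and b a bounded bilinear form on (V₁ × V₂) × Q. Suppose there exist maps û : Q → V₁ and û₂ : Q → V₂ and constants c₁, c₂ > 0 such that for every q ∈ Q: b([û(q), û₂(q)], q) ≥ ‖q‖_{Q₁}² + ‖q‖_{Q₂}², ‖û(q)‖_{V₁} ≤ c₁ ‖q‖_{Q₁}, and ‖û₂(q)‖_{V₂} ≤ c₂ ‖q‖_{Q₂}, where ‖q‖_Q² = ‖q‖_{Q₁}² + ‖q‖_{Q₂}². Then b satisfies the inf-sup condition on (V₁×V₂) × Q with constant β ≥ 1/max(c₁, c₂), where the norm on V₁×V₂ is (‖v₁‖²+‖v₂‖²)^{1/2}. -/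
theorem stmt18 {V₁ V₂ Q : Type*}
    [NormedAddCommGroup V₁] [InnerProductSpace ℝ V₁] [CompleteSpace V₁]
    [NormedAddCommGroup V₂] [InnerProductSpace ℝ V₂] [CompleteSpace V₂]
    [NormedAddCommGroup Q] [InnerProductSpace ℝ Q] [CompleteSpace Q]
    (b : (V₁ × V₂) →L[ℝ] Q →L[ℝ] ℝ)
    (n₁ n₂ : Q → ℝ) (hn : ∀ q : Q, ‖q‖ ^ 2 = n₁ q ^ 2 + n₂ q ^ 2)
    (u₁ : Q → V₁) (u₂ : Q → V₂) (c₁ c₂ : ℝ) (hc₁ : 0 < c₁) (hc₂ : 0 < c₂)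
    (hb : ∀ q : Q, n₁ q ^ 2 + n₂ q ^ 2 ≤ b (u₁ q, u₂ q) q)
    (h₁ : ∀ q : Q, ‖u₁ q‖ ≤ c₁ * n₁ q)
    (h₂ : ∀ q : Q, ‖u₂ q‖ ≤ c₂ * n₂ q) :
    ∀ q : Q,
      (1 / max c₁ c₂) * ‖q‖ ≤
        ⨆ v : {v : V₁ × V₂ // v ≠ 0},
          b v.1 q / Real.sqrt (‖v.1.1‖ ^ 2 + ‖v.1.2‖ ^ 2) := by
  have hM0 : 0 < max c₁ c₂ := lt_max_of_lt_left hc₁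
  -- positivity of the denominator for nonzero v
  have hpos : ∀ v : {v : V₁ × V₂ // v ≠ 0}, 0 < ‖v.1.1‖ ^ 2 + ‖v.1.2‖ ^ 2 := by
    intro v
    have hv : v.1.1 ≠ 0 ∨ v.1.2 ≠ 0 := by
      by_contra h
      push_neg at h
      exact v.2 (Prod.ext h.1 h.2)
    rcases hv with h | h
    · have : 0 < ‖v.1.1‖ := norm_pos_iff.mpr h
      nlinarith [sq_nonneg ‖v.1.2‖]
    · have : 0 < ‖v.1.2‖ := norm_pos_iff.mpr h
      nlinarith [sq_nonneg ‖v.1.1‖]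
  have hbdd : ∀ q : Q, BddAbove (Set.range fun v : {v : V₁ × V₂ // v ≠ 0} =>
      b v.1 q / Real.sqrt (‖v.1.1‖ ^ 2 + ‖v.1.2‖ ^ 2)) := by
    intro q
    refine ⟨‖b‖ * ‖q‖, ?_⟩
    rintro _ ⟨v, rfl⟩
    have hA := hpos v
    have hs : 0 < Real.sqrt (‖v.1.1‖ ^ 2 + ‖v.1.2‖ ^ 2) := Real.sqrt_pos.mpr hA
    have hle : ‖v.1‖ ≤ Real.sqrt (‖v.1.1‖ ^ 2 + ‖v.1.2‖ ^ 2) := by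
      have h2 : ‖v.1‖ ^ 2 ≤ ‖v.1.1‖ ^ 2 + ‖v.1.2‖ ^ 2 := by
        rw [Prod.norm_def]
        rcases max_cases ‖v.1.1‖ ‖v.1.2‖ with ⟨h, _⟩ | ⟨h, _⟩ <;> rw [h] <;>
          nlinarith [sq_nonneg ‖v.1.1‖, sq_nonneg ‖v.1.2‖]
      calc ‖v.1‖ = Real.sqrt (‖v.1‖ ^ 2) := (Real.sqrt_sq (norm_nonneg _)).symm
        _ ≤ Real.sqrt (‖v.1.1‖ ^ 2 + ‖v.1.2‖ ^ 2) := Real.sqrt_le_sqrt h2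
    rw [div_le_iff₀ hs]
    have hkey : b v.1 q ≤ ‖b‖ * ‖v.1‖ * ‖q‖ := by
      calc b v.1 q ≤ |b v.1 q| := le_abs_self _
        _ = ‖b v.1 q‖ := (Real.norm_eq_abs _).symm
        _ ≤ ‖b‖ * ‖v.1‖ * ‖q‖ := b.le_opNorm₂ v.1 q
    have h5 : ‖b‖ * ‖q‖ * ‖v.1‖ ≤ ‖b‖ * ‖q‖ * Real.sqrt (‖v.1.1‖ ^ 2 + ‖v.1.2‖ ^ 2) :=
      mul_le_mul_of_nonneg_left hle (by positivity)
    nlinarith [hkey, h5]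
  intro q
  by_cases hq : q = 0
  · subst hq
    simp only [norm_zero, mul_zero]
    rcases isEmpty_or_nonempty {v : V₁ × V₂ // v ≠ 0} with h | h
    · rw [Real.iSup_of_isEmpty]
    · obtain ⟨v⟩ := h
      refine le_ciSup_of_le (hbdd 0) v ?_
      simp
  · have hq' : 0 < ‖q‖ := norm_pos_iff.mpr hq
    have hn1 : 0 ≤ n₁ q := by nlinarith [(norm_nonneg (u₁ q)).trans (h₁ q)]
    have hn2 : 0 ≤ n₂ q := by nlinarith [(norm_nonneg (u₂ q)).trans (h₂ q)]
    have hqsq : 0 < n₁ q ^ 2 + n₂ q ^ 2 := by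
      rw [← hn q]; positivity
    have hb0 : 0 < b (u₁ q, u₂ q) q := lt_of_lt_of_le hqsq (hb q)
    have hv : ((u₁ q, u₂ q) : V₁ × V₂) ≠ 0 := by
      intro h
      rw [h] at hb0
      simp at hb0
    refine le_ciSup_of_le (hbdd q) ⟨(u₁ q, u₂ q), hv⟩ ?_
    have hA := hpos ⟨(u₁ q, u₂ q), hv⟩
    simp only at hA ⊢
    have hs : 0 < Real.sqrt (‖u₁ q‖ ^ 2 + ‖u₂ q‖ ^ 2) := Real.sqrt_pos.mpr hA
    have hden : Real.sqrt (‖u₁ q‖ ^ 2 + ‖u₂ q‖ ^ 2) ≤ max c₁ c₂ * ‖q‖ := by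
      have hle : ‖u₁ q‖ ^ 2 + ‖u₂ q‖ ^ 2 ≤ (max c₁ c₂ * ‖q‖) ^ 2 := by
        have e1 : ‖u₁ q‖ ^ 2 ≤ (c₁ * n₁ q) ^ 2 := by
          have := h₁ q; nlinarith [norm_nonneg (u₁ q)]
        have e2 : ‖u₂ q‖ ^ 2 ≤ (c₂ * n₂ q) ^ 2 := by
          have := h₂ q; nlinarith [norm_nonneg (u₂ q)]
        have e3 : c₁ ≤ max c₁ c₂ := le_max_left _ _
        have e4 : c₂ ≤ max c₁ c₂ := le_max_right _ _
        have hqn : ‖q‖ ^ 2 = n₁ q ^ 2 + n₂ q ^ 2 := hn q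
        nlinarith [sq_nonneg (n₁ q), sq_nonneg (n₂ q), hc₁.le, hc₂.le,
          mul_le_mul e3 e3 hc₁.le (hc₁.le.trans e3),
          mul_le_mul e4 e4 hc₂.le (hc₂.le.trans e4),
          mul_le_mul_of_nonneg_right (mul_le_mul e3 e3 hc₁.le (hc₁.le.trans e3)) (sq_nonneg (n₁ q)),
          mul_le_mul_of_nonneg_right (mul_le_mul e4 e4 hc₂.le (hc₂.le.trans e4)) (sq_nonneg (n₂ q))]
      calc Real.sqrt (‖u₁ q‖ ^ 2 + ‖u₂ q‖ ^ 2) ≤ Real.sqrt ((max c₁ c₂ * ‖q‖) ^ 2) :=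
            Real.sqrt_le_sqrt hle
        _ = max c₁ c₂ * ‖q‖ := Real.sqrt_sq (by positivity)
    have hnum : ‖q‖ ^ 2 ≤ b (u₁ q, u₂ q) q := by rw [hn q]; exact hb q
    have heq : (1 / max c₁ c₂) * ‖q‖ = ‖q‖ ^ 2 / (max c₁ c₂ * ‖q‖) := by
      field_simp
    rw [heq]
    exact div_le_div₀ hb0.le hnum hs hden
end
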